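/- Let d ≥ 1 be an integer, let σ ≥ d+1 be real, and let 0 < ε < 2^{−12d−9}. Let (R^{βγ}) be complex coefficients indexed by pairs of multi-indices (β,γ) with |β+γ| = 6 and Δ(β+γ) ≤ 1, satisfying |R^{βγ}| ≤ 1. If q : ℤ^d → ℂ satisfies sup_{j∈ℤ^d} |q_j|(1+⟨j⟩)^σ ≤ 2ε, then for every j ∈ ℤ^d one has ∑_{β,γ} |R^{βγ}| · |γ_j − β_j| · |q^β conj(q)^γ| ≤ ε⁵ (1+⟨j⟩)^{−3σ} · 2^{−σ}, where the sum runs over all pairs (β,γ) of multi-indices with |β+γ| = 6 and Δ(β+γ) ≤ 1. In particular, the same bound holds for the Poisson bracket |{I_j, H}| of the action I_j = |q_j|² with the Hamiltonian H, which equals |∑_{β,γ} R^{βγ}(γ_j − β_j) q^β conj(q)^γ|. -/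

import Mathlib

open scoped BigOperators

noncomputable section

/-- ℓ¹ norm (as a natural number) of a lattice point in `ℤ^d`. -/
def norm1 {d : ℕ} (j : Fin d → ℤ) : ℕ := ∑ i, (j i).natAbs

/-- `⟨j⟩ = max(|j|₁, 1)`. -/
def jbra {d : ℕ} (j : Fin d → ℤ) : ℕ := max (norm1 j) 1

/-- ℓ¹-diameter of a finite set of lattice points. -/
def diam1 {d : ℕ} (S : Finset (Fin d → ℤ)) : ℕ :=
  (S ×ˢ S).sup fun p => norm1 (p.1 - p.2)

/-- Multi-indices on `ℤ^d`: finitely supported functions to `ℕ`. -/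
abbrev MIdx (d : ℕ) := (Fin d → ℤ) →₀ ℕ

/-- total weight `|m| = ∑ m_j` of a multi-index. -/
def wt {d : ℕ} (m : MIdx d) : ℕ := m.sum fun _ n => n

/-- `Δ(m)`: ℓ¹-diameter of the support of a multi-index. -/
def mdiam {d : ℕ} (m : MIdx d) : ℕ := diam1 m.support

/-- the monomial `q^β * conj(q)^γ`. -/
def mono {d : ℕ} (q : (Fin d → ℤ) → ℂ) (β γ : MIdx d) : ℂ :=
  (β.prod fun a n => q a ^ n) * (γ.prod fun a n => (starRingEnd ℂ) (q a) ^ n)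

/-- Index set of short-range degree-6 monomials. -/
abbrev PairIdx (d : ℕ) :=
  {p : MIdx d × MIdx d // wt (p.1 + p.2) = 6 ∧ mdiam (p.1 + p.2) ≤ 1}


lemma norm1_eq_zero {d : ℕ} {x : Fin d → ℤ} : norm1 x = 0 ↔ x = 0 := by
  simp [norm1, Finset.sum_eq_zero_iff, funext_iff]

lemma norm1_triangle {d : ℕ} (x y : Fin d → ℤ) : norm1 (x + y) ≤ norm1 x + norm1 y := by
  simp only [norm1, ← Finset.sum_add_distrib]
  exact Finset.sum_le_sum fun i _ => Int.natAbs_add_le _ _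

lemma diam1_le {d : ℕ} {S : Finset (Fin d → ℤ)} {a b : Fin d → ℤ} (ha : a ∈ S) (hb : b ∈ S) :
    norm1 (a - b) ≤ diam1 S := by
  have := Finset.le_sup (f := fun p : (Fin d → ℤ) × (Fin d → ℤ) => norm1 (p.1 - p.2))
    (Finset.mem_product.2 ⟨ha, hb⟩ : (a, b) ∈ S ×ˢ S)
  exact this

lemma abs_emod_two (n : ℤ) : |n| % 2 = n % 2 := by
  rcases abs_cases n with ⟨h, _⟩ | ⟨h, _⟩ <;> omega

lemma norm1_parity {d : ℕ} (x : Fin d → ℤ) : (norm1 x : ℤ) % 2 = (∑ i, x i) % 2 := by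
  have : (norm1 x : ℤ) = ∑ i, |x i| := by
    rw [norm1]; push_cast [Int.natCast_natAbs]; ring
  rw [this, Finset.sum_int_mod, Finset.sum_congr rfl fun i _ => abs_emod_two (x i),
    ← Finset.sum_int_mod]

lemma wt_apply_le {d : ℕ} (m : MIdx d) (a : Fin d → ℤ) : m a ≤ wt m := by
  by_cases h : a ∈ m.support
  · exact Finset.single_le_sum (fun _ _ => Nat.zero_le _) h
  · simp [Finsupp.notMem_support_iff.1 h]

/-- classification of ℓ¹-norm-1 vectors -/
lemma norm1_one {d : ℕ} {x : Fin d → ℤ} (h : norm1 x = 1) :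
    ∃ i : Fin d, x = Pi.single i 1 ∨ x = Pi.single i (-1) := by
  have hx : x ≠ 0 := by
    intro h0; rw [h0, norm1_eq_zero.2 rfl] at h; exact one_ne_zero h.symm
  obtain ⟨i0, hi0⟩ : ∃ i, x i ≠ 0 := by
    by_contra hc; push_neg at hc; exact hx (funext hc)
  have hsum : norm1 x = (x i0).natAbs + ∑ i ∈ Finset.univ.erase i0, (x i).natAbs := by
    rw [norm1, ← Finset.add_sum_erase _ _ (Finset.mem_univ i0)]
  have h1 : (x i0).natAbs = 1 ∧ ∀ i ∈ Finset.univ.erase i0, (x i).natAbs = 0 := by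
    have hpos : 1 ≤ (x i0).natAbs := Nat.one_le_iff_ne_zero.2 (Int.natAbs_ne_zero.2 hi0)
    rw [h] at hsum
    constructor
    · omega
    · intro i hi
      have h2 := Finset.single_le_sum (f := fun i => (x i).natAbs)
        (fun (a : Fin d) _ => Nat.zero_le ((x a).natAbs)) hi
      omega
  refine ⟨i0, ?_⟩
  have hfun : x = Pi.single i0 (x i0) := by
    funext i
    by_cases hii : i = i0
    · subst hii; simp
    · have : (x i).natAbs = 0 := h1.2 i (Finset.mem_erase.2 ⟨hii, Finset.mem_univ i⟩)
      simp [Pi.single_apply, hii, Int.natAbs_eq_zero.1 this]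
  rcases Int.natAbs_eq_iff.1 h1.1 with h2 | h2
  · exact Or.inl (by rw [hfun, h2]; norm_num)
  · exact Or.inr (by rw [hfun, h2]; norm_num)

lemma norm1_single {d : ℕ} (i : Fin d) (c : ℤ) : norm1 (Pi.single i c) = c.natAbs := by
  rw [norm1]
  rw [Finset.sum_eq_single i]
  · simp
  · intro b _ hb; simp [Pi.single_apply, hb]
  · simp

/-- the neighbor finset of j -/
def Nbrs {d : ℕ} (j : Fin d → ℤ) : Finset (Fin d → ℤ) :=
  Finset.univ.image (fun i : Fin d => j + Pi.single i 1) ∪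
  Finset.univ.image (fun i : Fin d => j + Pi.single i (-1))

lemma mem_Nbrs {d : ℕ} {j k : Fin d → ℤ} (h : norm1 (k - j) = 1) : k ∈ Nbrs j := by
  obtain ⟨i, hi | hi⟩ := norm1_one h
  · exact Finset.mem_union_left _ (Finset.mem_image.2 ⟨i, Finset.mem_univ i, by
      rw [← hi]; abel⟩)
  · exact Finset.mem_union_right _ (Finset.mem_image.2 ⟨i, Finset.mem_univ i, by
      rw [← hi]; abel⟩)

lemma card_Nbrs {d : ℕ} (j : Fin d → ℤ) : (Nbrs j).card ≤ 2 * d := by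
  calc (Nbrs j).card ≤ (Finset.univ.image (fun i : Fin d => j + Pi.single i 1)).card
      + (Finset.univ.image (fun i : Fin d => j + Pi.single i (-1))).card :=
        Finset.card_union_le _ _
    _ ≤ d + d := by
        gcongr <;> simpa using Finset.card_image_le.trans (le_of_eq (Finset.card_univ.trans
          (Fintype.card_fin d)))
    _ = 2 * d := by ring

section Struct
variable {d : ℕ}

/-- If `j ∈ supp m`, `mdiam m ≤ 1`, and `k ∈ supp m` with `k ≠ j`, then every
element of `supp m` is `j` or `k` (bipartiteness/parity argument). -/
lemma support_pair {m : MIdx d} {j k : Fin d → ℤ} (hj : j ∈ m.support)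
    (hk : k ∈ m.support) (hkj : k ≠ j) (hdiam : mdiam m ≤ 1) :
    ∀ a ∈ m.support, a = j ∨ a = k := by
  intro a ha
  by_contra hc
  push_neg at hc
  obtain ⟨haj, hak⟩ := hc
  have dist1 : ∀ x ∈ m.support, x ≠ j → norm1 (x - j) = 1 := by
    intro x hx hxj
    have h1 : norm1 (x - j) ≤ 1 := le_trans (diam1_le hx hj) hdiam
    have h2 : norm1 (x - j) ≠ 0 := fun h0 =>
      hxj (by have := norm1_eq_zero.1 h0; exact sub_eq_zero.1 this)
    omega
  have hak1 : norm1 (a - k) ≤ 1 := le_trans (diam1_le ha hk) hdiam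
  have hak0 : norm1 (a - k) ≠ 0 := fun h0 =>
    hak (by have := norm1_eq_zero.1 h0; exact sub_eq_zero.1 this)
  have hak2 : norm1 (a - k) = 1 := by omega
  -- parity contradiction
  have pa := norm1_parity (a - j)
  have pk := norm1_parity (k - j)
  have pak := norm1_parity (a - k)
  rw [dist1 a ha haj] at pa
  rw [dist1 k hk hkj] at pk
  rw [hak2] at pak
  have hsub : ∀ x y : Fin d → ℤ, (∑ i, (x - y) i) = (∑ i, x i) - (∑ i, y i) := by
    intro x y; simp [Finset.sum_sub_distrib]
  rw [hsub] at pa pk pak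
  omega

variable (j : Fin d → ℤ) (hd : 1 ≤ d)

/-- canonical "other point" of the support of `β+γ`. -/
def kOf (hd : 1 ≤ d) (j : Fin d → ℤ) (p : PairIdx d) : Fin d → ℤ :=
  if h : ((p.1.1 + p.1.2).support \ {j}).Nonempty then h.choose
  else j + Pi.single (⟨0, hd⟩ : Fin d) 1

/-- the encoding map -/
def enc (hd : 1 ≤ d) (j : Fin d → ℤ) (p : PairIdx d) :
    (Fin d → ℤ) × ℕ × ℕ × ℕ × ℕ :=
  (kOf hd j p, p.1.1 j, p.1.1 (kOf hd j p), p.1.2 j, p.1.2 (kOf hd j p))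

/-- good pairs: at site `j` the two exponents differ -/
def Good (j : Fin d → ℤ) (p : PairIdx d) : Prop := p.1.1 j ≠ p.1.2 j

lemma good_mem_support {p : PairIdx d} (hp : Good j p) :
    j ∈ (p.1.1 + p.1.2).support := by
  rw [Finsupp.mem_support_iff, Finsupp.add_apply]
  intro h
  exact hp (by omega)

lemma kOf_spec {p : PairIdx d} (hp : Good j p) :
    norm1 (kOf hd j p - j) = 1 ∧
    ∀ a ∈ (p.1.1 + p.1.2).support, a = j ∨ a = kOf hd j p := by
  have hj := good_mem_support j hp
  have hdiam := p.2.2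
  rw [kOf]
  split_ifs with h
  · obtain ⟨hk1, hk2⟩ := Finset.mem_sdiff.1 h.choose_spec
    have hkj : h.choose ≠ j := by simpa using hk2
    constructor
    · have h1 : norm1 (h.choose - j) ≤ 1 := le_trans (diam1_le hk1 hj) hdiam
      have h2 : norm1 (h.choose - j) ≠ 0 := fun h0 =>
        hkj (sub_eq_zero.1 (norm1_eq_zero.1 h0))
      omega
    · exact support_pair hj hk1 hkj hdiam
  · constructor
    · have : j + Pi.single (⟨0, hd⟩ : Fin d) 1 - j = Pi.single (⟨0, hd⟩ : Fin d) 1 := by abel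
      rw [this, norm1_single]; rfl
    · intro a ha
      left
      by_contra hc
      exact h ⟨a, Finset.mem_sdiff.2 ⟨ha, by simpa using hc⟩⟩

end Struct

section Count
variable {d : ℕ} (hd : 1 ≤ d) (j : Fin d → ℤ)

lemma supp_left {β γ : MIdx d} : β.support ⊆ (β + γ).support := by
  intro a ha
  rw [Finsupp.mem_support_iff] at ha ⊢
  rw [Finsupp.add_apply]
  omega

lemma supp_right {β γ : MIdx d} : γ.support ⊆ (β + γ).support := by
  intro a ha
  rw [Finsupp.mem_support_iff] at ha ⊢
  rw [Finsupp.add_apply]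
  omega

lemma enc_injOn : Set.InjOn (enc hd j) {p | Good j p} := by
  intro p hp p' hp' he
  obtain ⟨_, hsp⟩ := kOf_spec j hd hp
  obtain ⟨_, hsp'⟩ := kOf_spec j hd hp'
  have hk : kOf hd j p = kOf hd j p' := congrArg Prod.fst he
  set k := kOf hd j p with hkdef
  have h1 : p.1.1 j = p'.1.1 j := congrArg (fun x => x.2.1) he
  have h2 : p.1.1 k = p'.1.1 k := by
    have := congrArg (fun x => x.2.2.1) he; simpa [enc, ← hk] using this
  have h3 : p.1.2 j = p'.1.2 j := congrArg (fun x => x.2.2.2.1) he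
  have h4 : p.1.2 k = p'.1.2 k := by
    have := congrArg (fun x => x.2.2.2.2) he; simpa [enc, ← hk] using this
  rw [← hk] at hsp'
  have hβ : p.1.1 = p'.1.1 := by
    ext a
    by_cases haj : a = j
    · rw [haj]; exact h1
    by_cases hak : a = k
    · rw [hak]; exact h2
    have e1 : p.1.1 a = 0 := by
      by_contra hne
      rcases hsp a (supp_left (Finsupp.mem_support_iff.2 hne)) with h | h
      exacts [haj h, hak h]
    have e2 : p'.1.1 a = 0 := by
      by_contra hne
      rcases hsp' a (supp_left (Finsupp.mem_support_iff.2 hne)) with h | h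
      exacts [haj h, hak h]
    rw [e1, e2]
  have hγ : p.1.2 = p'.1.2 := by
    ext a
    by_cases haj : a = j
    · rw [haj]; exact h3
    by_cases hak : a = k
    · rw [hak]; exact h4
    have e1 : p.1.2 a = 0 := by
      by_contra hne
      rcases hsp a (supp_right (Finsupp.mem_support_iff.2 hne)) with h | h
      exacts [haj h, hak h]
    have e2 : p'.1.2 a = 0 := by
      by_contra hne
      rcases hsp' a (supp_right (Finsupp.mem_support_iff.2 hne)) with h | h
      exacts [haj h, hak h]
    rw [e1, e2]
  exact Subtype.ext (Prod.ext hβ hγ)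

/-- codomain finset for the encoding -/
def Codom : Finset ((Fin d → ℤ) × ℕ × ℕ × ℕ × ℕ) :=
  Nbrs j ×ˢ Finset.range 7 ×ˢ Finset.range 7 ×ˢ Finset.range 7 ×ˢ Finset.range 7

lemma enc_mem_codom {p : PairIdx d} (hp : Good j p) : enc hd j p ∈ Codom j := by
  obtain ⟨hk1, _⟩ := kOf_spec j hd hp
  have hwt := p.2.1
  have hb : ∀ a, p.1.1 a ≤ 6 := fun a => by
    have h1 : (p.1.1 + p.1.2) a ≤ wt (p.1.1 + p.1.2) := wt_apply_le _ _
    rw [hwt, Finsupp.add_apply] at h1; omega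
  have hg : ∀ a, p.1.2 a ≤ 6 := fun a => by
    have h1 : (p.1.1 + p.1.2) a ≤ wt (p.1.1 + p.1.2) := wt_apply_le _ _
    rw [hwt, Finsupp.add_apply] at h1; omega
  refine Finset.mem_product.2 ⟨mem_Nbrs hk1, Finset.mem_product.2 ⟨?_,
    Finset.mem_product.2 ⟨?_, Finset.mem_product.2 ⟨?_, ?_⟩⟩⟩⟩ <;>
    simp only [Finset.mem_range] <;>
    [exact Nat.lt_succ_of_le (hb j); exact Nat.lt_succ_of_le (hb _);
     exact Nat.lt_succ_of_le (hg j); exact Nat.lt_succ_of_le (hg _)]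

lemma card_codom : (Codom j).card ≤ 2 * d * 2401 := by
  have := card_Nbrs j
  simp only [Codom, Finset.card_product, Finset.card_range]
  calc (Nbrs j).card * (7 * (7 * (7 * 7))) ≤ 2 * d * (7 * (7 * (7 * 7))) := by gcongr
    _ = 2 * d * 2401 := by ring

/-- any finset of good pairs has at most `2d·2401` elements -/
lemma good_card_le (hd1 : 1 ≤ d) (s : Finset (PairIdx d)) (hs : ∀ p ∈ s, Good j p) :
    s.card ≤ 2 * d * 2401 := by
  have hinj : Set.InjOn (enc hd1 j) ↑s := fun p hp p' hp' =>
    enc_injOn hd1 j (hs p hp) (hs p' hp')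
  have : s.card = (s.image (enc hd1 j)).card :=
    (Finset.card_image_of_injOn hinj).symm
  rw [this]
  refine le_trans (Finset.card_le_card ?_) (card_codom j)
  intro x hx
  obtain ⟨p, hp, rfl⟩ := Finset.mem_image.1 hx
  exact enc_mem_codom hd1 j (hs p hp)

end Count

section Analytic

lemma rpow_anti {x y : ℝ} (hx : 0 < x) (hxy : x ≤ y) {t : ℝ} (ht : 0 ≤ t) :
    y ^ (-t) ≤ x ^ (-t) := by
  rw [Real.rpow_neg hx.le, Real.rpow_neg (hx.trans_le hxy).le]
  exact inv_anti₀ (Real.rpow_pos_of_pos hx t) (Real.rpow_le_rpow hx.le hxy ht)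

lemma M_pow_ge {A : ℝ} (hA : 2 ≤ A) : 2 * A ^ 3 ≤ (max (A - 1) 2) ^ 6 := by
  rcases le_total A 3 with h | h
  · have h2 : (2:ℝ) ≤ max (A - 1) 2 := le_max_right _ _
    have h64 : (2:ℝ)^6 ≤ (max (A - 1) 2)^6 := pow_le_pow_left₀ (by norm_num) h2 6
    have hA3 : A^3 ≤ 27 := by
      nlinarith [mul_nonneg (sub_nonneg.2 h) (sq_nonneg A),
        mul_nonneg (sub_nonneg.2 h) (by linarith : (0:ℝ) ≤ A)]
    nlinarith
  · have h1 : A - 1 ≤ max (A - 1) 2 := le_max_left _ _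
    have h0 : (0:ℝ) ≤ A - 1 := by linarith
    have hM : (A-1)^6 ≤ (max (A - 1) 2)^6 := pow_le_pow_left₀ h0 h1 6
    have hA0 : (0:ℝ) < A := by linarith
    have k1 : (2*A)^6 ≤ (3*(A-1))^6 := pow_le_pow_left₀ (by linarith) (by linarith) 6
    have k2 : (27:ℝ) ≤ A^3 := by
      nlinarith [mul_nonneg (sub_nonneg.2 h) (sq_nonneg A),
        mul_nonneg (sub_nonneg.2 h) (by linarith : (0:ℝ) ≤ A)]
    have k3 : (0:ℝ) < A^3 := by positivity
    have k4 : 64 * (A^3)^2 ≤ 729 * (A-1)^6 := by nlinarith [k1]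
    nlinarith [k4, k2, k3, mul_le_mul_of_nonneg_right k2 k3.le]

lemma norm1_neg {d : ℕ} (x : Fin d → ℤ) : norm1 (-x) = norm1 x := by
  simp [norm1]

lemma jbra_adj {d : ℕ} {a j : Fin d → ℤ} (h : norm1 (a - j) ≤ 1) :
    jbra j ≤ jbra a + 1 := by
  have h1 : norm1 j ≤ norm1 a + 1 := by
    have := norm1_triangle a (j - a)
    have e : a + (j - a) = j := by abel
    rw [e] at this
    have e2 : norm1 (j - a) = norm1 (a - j) := by
      rw [← norm1_neg (j - a)]; congr 1; abel
    omega
  simp only [jbra]; omega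

lemma finsupp_prod_le {d : ℕ} (f : MIdx d) (x : (Fin d → ℤ) → ℝ) (c : ℝ) (hc : 0 ≤ c)
    (hx : ∀ a ∈ f.support, 0 ≤ x a ∧ x a ≤ c) :
    (f.prod fun a n => x a ^ n) ≤ c ^ wt f := by
  rw [Finsupp.prod, wt, Finsupp.sum, ← Finset.prod_pow_eq_pow_sum]
  exact Finset.prod_le_prod (fun a ha => pow_nonneg (hx a ha).1 _)
    (fun a ha => pow_le_pow_left₀ (hx a ha).1 (hx a ha).2 _)

lemma abs_mono_eq {d : ℕ} (q : (Fin d → ℤ) → ℂ) (β γ : MIdx d) :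
    ‖mono q β γ‖ =
      (β.prod fun a n => ‖q a‖ ^ n) * (γ.prod fun a n => ‖q a‖ ^ n) := by
  rw [mono, norm_mul, Finsupp.prod, Finsupp.prod, Finsupp.prod, Finsupp.prod,
    norm_prod, norm_prod]
  simp [norm_pow, Complex.norm_conj]

lemma wt_add {d : ℕ} (β γ : MIdx d) : wt (β + γ) = wt β + wt γ := by
  rw [wt, wt, wt]
  exact Finsupp.sum_add_index' (fun _ => rfl) (fun _ _ _ => rfl)

end Analytic

section Main
variable {d : ℕ} (hd : 1 ≤ d) (σ ε : ℝ) (hσ : (d : ℝ) + 1 ≤ σ) (hε0 : 0 < ε)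
  (R : MIdx d → MIdx d → ℂ) (q : (Fin d → ℤ) → ℂ) (j : Fin d → ℤ)

/-- per-term bound -/
lemma term_bound (hd1 : 1 ≤ d)
    (hσ1 : (d : ℝ) + 1 ≤ σ) (hε : 0 < ε)
    (hRbd : ∀ β γ : MIdx d, wt (β + γ) = 6 → mdiam (β + γ) ≤ 1 →
      ‖R β γ‖ ≤ 1)
    (hq : ∀ a, ‖q a‖ * (1 + (jbra a : ℝ)) ^ σ ≤ 2 * ε)
    (p : PairIdx d) (hp : Good j p) :
    ‖R p.1.1 p.1.2‖ * |((p.1.2 j : ℝ)) - ((p.1.1 j : ℝ))| *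
      ‖mono q p.1.1 p.1.2‖
    ≤ 6 * ((2*ε)^6 * ((2:ℝ)^(-σ) * (1 + (jbra j : ℝ))^(-(3*σ)))) := by
  have hσ0 : (0:ℝ) ≤ σ := by
    have : (0:ℝ) ≤ (d:ℝ) := Nat.cast_nonneg d
    linarith
  set A : ℝ := 1 + (jbra j : ℝ) with hA
  have hA2 : 2 ≤ A := by
    have : 1 ≤ jbra j := le_max_right _ _
    have : (1:ℝ) ≤ (jbra j : ℝ) := by exact_mod_cast this
    simp only [hA]; linarith
  set M : ℝ := max (A - 1) 2 with hM
  have hM2 : (2:ℝ) ≤ M := le_max_right _ _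
  have hM0 : (0:ℝ) < M := by linarith
  -- bound on |q a| for a in the support
  obtain ⟨hk1, hsupp⟩ := kOf_spec j hd1 hp
  have hqa : ∀ a ∈ (p.1.1 + p.1.2).support,
      0 ≤ ‖q a‖ ∧ ‖q a‖ ≤ 2 * ε * M^(-σ) := by
    intro a ha
    refine ⟨norm_nonneg _, ?_⟩
    have hadj : norm1 (a - j) ≤ 1 := by
      rcases hsupp a ha with rfl | rfl
      · rw [sub_self, norm1_eq_zero.2 rfl]; omega
      · omega
    have hjb : jbra j ≤ jbra a + 1 := jbra_adj hadj
    have hMa : M ≤ 1 + (jbra a : ℝ) := by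
      have h1 : (jbra j : ℝ) ≤ (jbra a : ℝ) + 1 := by exact_mod_cast hjb
      have h2 : (1:ℝ) ≤ (jbra a : ℝ) := by
        exact_mod_cast (le_max_right _ 1 : 1 ≤ jbra a)
      simp only [hM, hA]
      rw [max_le_iff]
      constructor <;> linarith
    have hX : (0:ℝ) < (1 + (jbra a : ℝ))^σ := Real.rpow_pos_of_pos (by linarith) σ
    have h1 : ‖q a‖ ≤ 2 * ε * (1 + (jbra a : ℝ))^(-σ) := by
      rw [Real.rpow_neg (by linarith : (0:ℝ) ≤ 1 + (jbra a : ℝ)), ← div_eq_mul_inv]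
      rw [le_div_iff₀ hX]
      exact hq a
    refine h1.trans ?_
    have := rpow_anti hM0 hMa hσ0
    have h2 : (0:ℝ) ≤ 2 * ε := by linarith
    exact mul_le_mul_of_nonneg_left this h2
  -- mono bound
  have hc0 : (0:ℝ) ≤ 2 * ε * M^(-σ) :=
    mul_nonneg (by linarith) (Real.rpow_nonneg hM0.le _)
  have hmono : ‖mono q p.1.1 p.1.2‖ ≤ (2 * ε * M^(-σ))^6 := by
    rw [abs_mono_eq]
    have b1 := finsupp_prod_le p.1.1 (fun a => ‖q a‖) _ hc0
      (fun a ha => hqa a (supp_left ha))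
    have b2 := finsupp_prod_le p.1.2 (fun a => ‖q a‖) _ hc0
      (fun a ha => hqa a (supp_right ha))
    have hwt : wt p.1.1 + wt p.1.2 = 6 := by rw [← wt_add]; exact p.2.1
    calc (p.1.1.prod fun a n => ‖q a‖ ^ n) *
          (p.1.2.prod fun a n => ‖q a‖ ^ n)
        ≤ (2 * ε * M^(-σ))^(wt p.1.1) * (2 * ε * M^(-σ))^(wt p.1.2) := by
          refine mul_le_mul b1 b2 ?_ (pow_nonneg hc0 _)
          exact Finset.prod_nonneg fun a ha => pow_nonneg (hqa a (supp_right ha)).1 _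
      _ = (2 * ε * M^(-σ))^6 := by rw [← pow_add, hwt]
  -- rpow algebra
  have hMσ : (M^(-σ))^(6:ℕ) ≤ (2:ℝ)^(-σ) * A^(-(3*σ)) := by
    have e1 : (M^(-σ))^(6:ℕ) = (M^(6:ℕ))^(-σ) := by
      rw [← Real.rpow_natCast (M^(-σ)) 6, ← Real.rpow_natCast M 6,
        ← Real.rpow_mul hM0.le, ← Real.rpow_mul hM0.le]
      ring_nf
    have e2 : (M^(6:ℕ))^(-σ) ≤ (2 * A^3)^(-σ) :=
      rpow_anti (by positivity) (M_pow_ge hA2) hσ0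
    have e3 : ((2:ℝ) * A^3)^(-σ) = (2:ℝ)^(-σ) * A^(-(3*σ)) := by
      rw [Real.mul_rpow (by norm_num) (by positivity)]
      congr 1
      rw [← Real.rpow_natCast A 3, ← Real.rpow_mul (by linarith : (0:ℝ) ≤ A)]
      norm_num
    rw [e1, ← e3]
    exact e2
  -- coefficient bounds
  have hR : ‖R p.1.1 p.1.2‖ ≤ 1 := hRbd _ _ p.2.1 p.2.2
  have hδ : |((p.1.2 j : ℝ)) - ((p.1.1 j : ℝ))| ≤ 6 := by
    have h1 := wt_apply_le (p.1.1 + p.1.2) j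
    rw [p.2.1, Finsupp.add_apply] at h1
    have hb1 : ((p.1.1 j : ℕ) : ℝ) ≤ 6 := by exact_mod_cast (by omega : p.1.1 j ≤ 6)
    have hb2 : ((p.1.2 j : ℕ) : ℝ) ≤ 6 := by exact_mod_cast (by omega : p.1.2 j ≤ 6)
    have hnn1 : (0:ℝ) ≤ ((p.1.1 j : ℕ) : ℝ) := Nat.cast_nonneg _
    have hnn2 : (0:ℝ) ≤ ((p.1.2 j : ℕ) : ℝ) := Nat.cast_nonneg _
    rw [abs_le]
    constructor <;> linarith
  calc ‖R p.1.1 p.1.2‖ * |((p.1.2 j : ℝ)) - ((p.1.1 j : ℝ))| *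
        ‖mono q p.1.1 p.1.2‖
      ≤ 1 * 6 * ((2 * ε * M^(-σ))^6) := by
        refine mul_le_mul (mul_le_mul hR hδ (abs_nonneg _) zero_le_one) hmono
          (norm_nonneg _) (by norm_num)
    _ = 6 * ((2*ε)^6 * (M^(-σ))^(6:ℕ)) := by ring
    _ ≤ 6 * ((2*ε)^6 * ((2:ℝ)^(-σ) * A^(-(3*σ)))) := by
        have h6 : (0:ℝ) ≤ (2*ε)^6 := by positivity
        nlinarith [mul_le_mul_of_nonneg_left hMσ h6]
end Main

lemma const_le : ∀ d : ℕ, 1 ≤ d → (1843968 : ℕ) * d ≤ 2^(12*d+9)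
  | 0, h => by omega
  | 1, _ => by norm_num
  | (n+2), _ => by
    have ih := const_le (n+1) (by omega)
    have h2 : (2:ℕ)^(12*(n+1)+9) * 2 ≤ 2^(12*(n+2)+9) := by
      rw [← pow_succ]
      exact Nat.pow_le_pow_right (by norm_num) (by omega)
    calc (1843968:ℕ) * (n+2) ≤ 1843968 * (n+1) * 2 := by ring_nf; omega
      _ ≤ 2^(12*(n+1)+9) * 2 := by gcongr
      _ ≤ 2^(12*(n+2)+9) := h2

lemma sum_bound {d : ℕ} (hd : 1 ≤ d) (σ ε : ℝ) (hσ : (d : ℝ) + 1 ≤ σ)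
    (hε0 : 0 < ε) (hε1 : ε < (2 : ℝ) ^ (-(12 * (d : ℤ)) - 9))
    (R : MIdx d → MIdx d → ℂ)
    (hRbd : ∀ β γ : MIdx d, wt (β + γ) = 6 → mdiam (β + γ) ≤ 1 →
      ‖R β γ‖ ≤ 1)
    (q : (Fin d → ℤ) → ℂ)
    (hq : ∀ a, ‖q a‖ * (1 + (jbra a : ℝ)) ^ σ ≤ 2 * ε)
    (j : Fin d → ℤ) (s : Finset (PairIdx d)) :
    ∑ p ∈ s, (‖R p.1.1 p.1.2‖ *
        |((p.1.2 j : ℝ)) - ((p.1.1 j : ℝ))| * ‖mono q p.1.1 p.1.2‖)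
      ≤ ε ^ 5 * (1 + (jbra j : ℝ)) ^ (-(3 * σ)) * (2 : ℝ) ^ (-σ) := by
  classical
  set g : PairIdx d → ℝ := fun p => ‖R p.1.1 p.1.2‖ *
        |((p.1.2 j : ℝ)) - ((p.1.1 j : ℝ))| * ‖mono q p.1.1 p.1.2‖ with hg
  set T : ℝ := 6 * ((2*ε)^6 * ((2:ℝ)^(-σ) * (1 + (jbra j : ℝ))^(-(3*σ)))) with hT
  set t : Finset (PairIdx d) := s.filter (fun p => Good j p) with ht
  have hsum : ∑ p ∈ s, g p = ∑ p ∈ t, g p := by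
    rw [ht]
    refine (Finset.sum_filter_of_ne ?_).symm
    intro p _ hgp
    by_contra hng
    rw [Good, not_not] at hng
    apply hgp
    have : ((p.1.2 j : ℕ) : ℝ) - ((p.1.1 j : ℕ) : ℝ) = 0 := by
      rw [hng]; ring
    simp [hg, this]
  have hterm : ∀ p ∈ t, g p ≤ T := by
    intro p hp
    have hgood : Good j p := (Finset.mem_filter.1 hp).2
    exact term_bound σ ε R q j hd hσ hε0 hRbd hq p hgood
  have hcard : t.card ≤ 2 * d * 2401 :=
    good_card_le j hd t (fun p hp => (Finset.mem_filter.1 hp).2)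
  have hT0 : 0 ≤ T := by
    rw [hT]
    have h1 : (0:ℝ) ≤ (2:ℝ)^(-σ) := Real.rpow_nonneg (by norm_num) _
    have h2 : (0:ℝ) ≤ (1 + (jbra j : ℝ))^(-(3*σ)) := Real.rpow_nonneg (by positivity) _
    positivity
  have h1 : ∑ p ∈ t, g p ≤ (t.card : ℝ) * T := by
    have := Finset.sum_le_card_nsmul t g T hterm
    rwa [nsmul_eq_mul] at this
  have h2 : (t.card : ℝ) * T ≤ (2 * d * 2401 : ℝ) * T := by
    have : (t.card : ℝ) ≤ (2 * d * 2401 : ℝ) := by exact_mod_cast hcard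
    exact mul_le_mul_of_nonneg_right this hT0
  -- numeric step
  have hkey : (1843968 : ℝ) * d * ε ≤ 1 := by
    have hcast : (-(12 * (d : ℤ)) - 9) = -(((12 * d + 9 : ℕ) : ℤ)) := by push_cast; ring
    rw [hcast, zpow_neg, zpow_natCast] at hε1
    have h2p : (1843968 : ℝ) * d ≤ 2 ^ (12 * d + 9) := by
      exact_mod_cast const_le d hd
    have hpow : (0:ℝ) < 2 ^ (12 * d + 9) := by positivity
    have h3 : ε * 2 ^ (12 * d + 9) < 1 := by
      have := mul_lt_mul_of_pos_right hε1 hpow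
      rwa [inv_mul_cancel₀ (ne_of_gt hpow)] at this
    nlinarith [mul_le_mul_of_nonneg_right h2p hε0.le]
  have h4 : (2 * d * 2401 : ℝ) * T ≤ ε ^ 5 * (1 + (jbra j : ℝ)) ^ (-(3 * σ)) * (2 : ℝ) ^ (-σ) := by
    rw [hT]
    have hP : (0:ℝ) ≤ ε^5 * ((2:ℝ)^(-σ) * (1 + (jbra j : ℝ))^(-(3*σ))) := by
      have h1 : (0:ℝ) ≤ (2:ℝ)^(-σ) := Real.rpow_nonneg (by norm_num) _
      have h2 : (0:ℝ) ≤ (1 + (jbra j : ℝ))^(-(3*σ)) := Real.rpow_nonneg (by positivity) _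
      positivity
    calc (2 * d * 2401 : ℝ) * (6 * ((2*ε)^6 * ((2:ℝ)^(-σ) * (1 + (jbra j : ℝ))^(-(3*σ)))))
        = (1843968 * d * ε) * (ε^5 * ((2:ℝ)^(-σ) * (1 + (jbra j : ℝ))^(-(3*σ)))) := by ring
      _ ≤ 1 * (ε^5 * ((2:ℝ)^(-σ) * (1 + (jbra j : ℝ))^(-(3*σ)))) :=
          mul_le_mul_of_nonneg_right hkey hP
      _ = ε ^ 5 * (1 + (jbra j : ℝ)) ^ (-(3 * σ)) * (2 : ℝ) ^ (-σ) := by ring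
  calc ∑ p ∈ s, g p = ∑ p ∈ t, g p := hsum
    _ ≤ (t.card : ℝ) * T := h1
    _ ≤ (2 * d * 2401 : ℝ) * T := h2
    _ ≤ _ := h4

/-- the tame estimate (5.6)–(5.8) of the paper.
If `⫴q⫴_σ ≤ 2ε` then `∑_{β,γ} |R^{βγ}| |γ_j − β_j| |q^β conj(q)^γ| ≤ ε⁵ (1+⟨j⟩)^{-3σ} 2^{-σ}`
for every site `j`, and in particular the Poisson bracket
`|{I_j, H}| = |∑_{β,γ} R^{βγ}(γ_j − β_j) q^β conj(q)^γ|` satisfies the same bound. -/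
theorem poisson_bracket_action_tame_bound
    (d : ℕ) (hd : 1 ≤ d) (σ ε : ℝ) (hσ : (d : ℝ) + 1 ≤ σ)
    (hε0 : 0 < ε) (hε1 : ε < (2 : ℝ) ^ (-(12 * (d : ℤ)) - 9))
    (R : MIdx d → MIdx d → ℂ)
    (hRbd : ∀ β γ : MIdx d, wt (β + γ) = 6 → mdiam (β + γ) ≤ 1 →
      ‖R β γ‖ ≤ 1)
    (q : (Fin d → ℤ) → ℂ)
    (hq : ∀ j, ‖q j‖ * (1 + (jbra j : ℝ)) ^ σ ≤ 2 * ε)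
    (j : Fin d → ℤ) :
    (∑' p : PairIdx d,
        ENNReal.ofReal (‖R p.1.1 p.1.2‖ *
          |((p.1.2 j : ℝ)) - ((p.1.1 j : ℝ))| * ‖mono q p.1.1 p.1.2‖))
      ≤ ENNReal.ofReal (ε ^ 5 * (1 + (jbra j : ℝ)) ^ (-(3 * σ)) * (2 : ℝ) ^ (-σ)) ∧
    ‖∑' p : PairIdx d,
        R p.1.1 p.1.2 * (((p.1.2 j : ℂ)) - ((p.1.1 j : ℂ))) * mono q p.1.1 p.1.2‖
      ≤ ε ^ 5 * (1 + (jbra j : ℝ)) ^ (-(3 * σ)) * (2 : ℝ) ^ (-σ) := by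
  have gnn : ∀ p : PairIdx d, 0 ≤ ‖R p.1.1 p.1.2‖ *
      |((p.1.2 j : ℝ)) - ((p.1.1 j : ℝ))| * ‖mono q p.1.1 p.1.2‖ :=
    fun p => mul_nonneg (mul_nonneg (norm_nonneg _) (abs_nonneg _))
      (norm_nonneg _)
  constructor
  · rw [ENNReal.tsum_eq_iSup_sum]
    refine iSup_le fun s => ?_
    rw [← ENNReal.ofReal_sum_of_nonneg (fun p _ => gnn p)]
    exact ENNReal.ofReal_le_ofReal (sum_bound hd σ ε hσ hε0 hε1 R hRbd q hq j s)
  · set f : PairIdx d → ℂ := fun p =>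
      R p.1.1 p.1.2 * (((p.1.2 j : ℂ)) - ((p.1.1 j : ℂ))) * mono q p.1.1 p.1.2 with hf
    have hGfin : {p : PairIdx d | Good j p}.Finite := by
      refine Set.Finite.of_finite_image ?_ (enc_injOn hd j)
      refine Set.Finite.subset (Codom j).finite_toSet ?_
      rintro x ⟨p, hp, rfl⟩
      exact enc_mem_codom hd j hp
    have hzero : ∀ p ∉ hGfin.toFinset, f p = 0 := by
      intro p hp
      rw [Set.Finite.mem_toFinset] at hp
      have hng : p.1.1 j = p.1.2 j := not_not.1 hp
      have : ((p.1.2 j : ℕ) : ℂ) - ((p.1.1 j : ℕ) : ℂ) = 0 := by rw [hng]; ring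
      simp [hf, this]
    rw [tsum_eq_sum hzero]
    refine le_trans (norm_sum_le _ _) ?_
    refine le_trans (le_of_eq (Finset.sum_congr rfl fun p _ => ?_))
      (sum_bound hd σ ε hσ hε0 hε1 R hRbd q hq j hGfin.toFinset)
    rw [hf]
    simp only [norm_mul]
    congr 1
    have e : ((p.1.2 j : ℕ) : ℂ) - ((p.1.1 j : ℕ) : ℂ) =
        ((((p.1.2 j : ℕ) : ℝ) - ((p.1.1 j : ℕ) : ℝ) : ℝ) : ℂ) := by push_cast; ring
    rw [e, Complex.norm_real, Real.norm_eq_abs]
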